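/- Let Φ be an irreducible root system with extended basis Δ' and the associated partial order ≤ on Φ (defined via the affine root system). Then: (1) the minimal elements of ≤ are exactly the elements of Δ'; (2) if α ≤ β then −β ≤ −α; (3) the restriction of ≤ to the set of positive roots (relative to Δ) coincides with the restriction of the usual dominance order relative to Δ. -/

import Mathlib

open Finset

/-- A based, irreducible, reduced root system in a Euclidean space, together with
coordinate data with respect to the base `Δ`, the highest root, and the
extended base `Δ' = Δ ∪ {-highest}`. -/
structure BasedRootSystem (V : Type*) [NormedAddCommGroup V] [InnerProductSpace ℝ V] where
  Φ : Finset V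
  zero_not_mem : (0 : V) ∉ Φ
  neg_mem : ∀ α ∈ Φ, -α ∈ Φ
  reduced : ∀ α ∈ Φ, ∀ c : ℝ, c • α ∈ Φ → c = 1 ∨ c = -1
  crystallographic : ∀ α ∈ Φ, ∀ β ∈ Φ, ∃ n : ℤ,
    2 * (inner ℝ α β : ℝ) / (inner ℝ α α : ℝ) = (n : ℝ)
  reflect_mem : ∀ α ∈ Φ, ∀ β ∈ Φ, β - (2 * (inner ℝ β α : ℝ) / (inner ℝ α α : ℝ)) • α ∈ Φ
  Δ : Finset V
  base_sub : Δ ⊆ Φ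
  indep : LinearIndependent ℝ (fun γ : Δ => (γ : V))
  coord : V → V → ℤ
  coord_zero : ∀ γ : V, coord 0 γ = 0
  coord_spec : ∀ α ∈ Φ, α = ∑ γ ∈ Δ, (coord α γ : ℝ) • γ
  coord_sign : ∀ α ∈ Φ, (∀ γ ∈ Δ, 0 ≤ coord α γ) ∨ (∀ γ ∈ Δ, coord α γ ≤ 0)
  highest : V
  highest_mem : highest ∈ Φ
  highest_pos : ∀ γ ∈ Δ, 1 ≤ coord highest γ
  highest_is_highest : ∀ α ∈ Φ, ∀ γ ∈ Δ, coord α γ ≤ coord highest γ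

namespace BasedRootSystem

variable {V : Type*} [NormedAddCommGroup V] [InnerProductSpace ℝ V] (B : BasedRootSystem V)

/-- `α` is positive relative to the base `Δ`. -/
def IsPos (α : V) : Prop := ∀ γ ∈ B.Δ, 0 ≤ B.coord α γ

/-- `ε_α` : `0` if `α` is positive, `1` otherwise. -/
noncomputable def eps (α : V) : ℤ := by
  classical exact if B.IsPos α then 0 else 1

/-- The extended base `Δ' = Δ ∪ {-α_M}`. -/
noncomputable def extBase : Finset V := by
  classical exact insert (-B.highest) B.Δ

/-- The Coxeter number: one plus the height of the highest root. -/
def cox : ℤ := (∑ γ ∈ B.Δ, B.coord B.highest γ) + 1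

/-- Coefficientwise order on affine roots `(α, n)`, via their decomposition in the
affine basis `Δ_aff`. -/
def affLe (p q : V × ℤ) : Prop :=
  p.2 ≤ q.2 ∧ ∀ γ ∈ B.Δ,
    B.coord p.1 γ + p.2 * B.coord B.highest γ ≤ B.coord q.1 γ + q.2 * B.coord B.highest γ

/-- The partial order on `Φ` induced from the affine root system:
`α ≤ β` iff `(α, v + ε_α) ≤ (β, v + ε_β)` coefficientwise for every `v`. -/
def rle (α β : V) : Prop := B.affLe (α, B.eps α) (β, B.eps β)

/-- `c` is a decomposition of `α` as a nonnegative integral combination of the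
extended base `Δ'`. -/
def IsDecomp (α : V) (c : V → ℕ) : Prop :=
  α = ∑ γ ∈ B.extBase, (c γ : ℝ) • γ

/-- The sum of the coefficients of a decomposition in `Δ'`. -/
noncomputable def decompSum (c : V → ℕ) : ℤ := ∑ γ ∈ B.extBase, (c γ : ℤ)

/-- A subset of `Φ` is `Δ'`-complete if it is downward closed for the order `rle`. -/
def Complete (Ψ : Set V) : Prop :=
  ∀ α ∈ Ψ, ∀ β ∈ B.Φ, B.rle β α → β ∈ Ψ

/-- The set of ratios `(Σ ε_{α_i})/t` over nonempty zero-sum families in `X`. -/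
noncomputable def ratioSet (X : Set V) : Set ℝ :=
  {q | ∃ (t : ℕ) (a : Fin t → V), 0 < t ∧ (∀ i, a i ∈ X) ∧ (∑ i, a i) = 0 ∧
        q = (∑ i, (B.eps (a i) : ℝ)) / (t : ℝ)}

end BasedRootSystem
namespace BasedRootSystem

open scoped Classical

variable {V : Type*} [NormedAddCommGroup V] [InnerProductSpace ℝ V] (B : BasedRootSystem V)

lemma coeff_zero {c : V → ℝ} (h : ∑ γ ∈ B.Δ, c γ • γ = 0) : ∀ γ ∈ B.Δ, c γ = 0 := by
  have hi := Fintype.linearIndependent_iff.mp B.indep (fun γ : B.Δ => c γ)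
  have h' : ∑ γ : B.Δ, c γ • (γ : V) = 0 := by
    rw [Finset.sum_coe_sort B.Δ (fun γ => c γ • γ)]; exact h
  intro γ hγ
  exact hi h' ⟨γ, hγ⟩

lemma coord_repr {α : V} (hα : α ∈ B.Φ) (c : V → ℤ)
    (h : α = ∑ γ ∈ B.Δ, (c γ : ℝ) • γ) : ∀ γ ∈ B.Δ, B.coord α γ = c γ := by
  have h0 : ∑ γ ∈ B.Δ, ((B.coord α γ : ℝ) - (c γ : ℝ)) • γ = 0 := by
    simp only [sub_smul, Finset.sum_sub_distrib]
    rw [← B.coord_spec α hα, ← h, sub_self]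
  intro γ hγ
  have h1 := B.coeff_zero h0 γ hγ
  have h2 : (B.coord α γ : ℝ) = (c γ : ℝ) := by linarith
  exact_mod_cast h2

lemma eq_of_coord_eq {α β : V} (hα : α ∈ B.Φ) (hβ : β ∈ B.Φ)
    (h : ∀ γ ∈ B.Δ, B.coord α γ = B.coord β γ) : α = β := by
  rw [B.coord_spec α hα, B.coord_spec β hβ]
  exact Finset.sum_congr rfl (fun γ hγ => by rw [h γ hγ])

lemma base_sum {γ0 : V} (h0 : γ0 ∈ B.Δ) :
    ∑ γ ∈ B.Δ, (if γ = γ0 then (1:ℝ) else 0) • γ = γ0 := by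
  have h1 : ∀ γ ∈ B.Δ, (if γ = γ0 then (1:ℝ) else 0) • γ = if γ = γ0 then γ0 else 0 := by
    intro γ _
    split_ifs with h
    · simp [h]
    · simp
  rw [Finset.sum_congr rfl h1, Finset.sum_ite_eq' B.Δ γ0 (fun _ => γ0), if_pos h0]

lemma coord_base {γ0 : V} (h0 : γ0 ∈ B.Δ) :
    ∀ γ ∈ B.Δ, B.coord γ0 γ = if γ = γ0 then 1 else 0 := by
  apply B.coord_repr (B.base_sub h0)
  have h1 : ∀ γ ∈ B.Δ, (Int.cast (if γ = γ0 then (1:ℤ) else 0) : ℝ) • γ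
      = (if γ = γ0 then (1:ℝ) else 0) • γ := by
    intro γ _; split_ifs <;> simp
  rw [Finset.sum_congr rfl h1, B.base_sum h0]

lemma coord_neg {α : V} (hα : α ∈ B.Φ) :
    ∀ γ ∈ B.Δ, B.coord (-α) γ = -B.coord α γ := by
  apply B.coord_repr (B.neg_mem α hα)
  have : ∑ γ ∈ B.Δ, ((-B.coord α γ : ℤ) : ℝ) • γ = -∑ γ ∈ B.Δ, (B.coord α γ : ℝ) • γ := by
    rw [← Finset.sum_neg_distrib]
    apply Finset.sum_congr rfl
    intro γ _
    push_cast
    rw [neg_smul]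
  rw [this, ← B.coord_spec α hα]

lemma exists_coord_ne {α : V} (hα : α ∈ B.Φ) : ∃ γ ∈ B.Δ, B.coord α γ ≠ 0 := by
  by_contra h
  push_neg at h
  apply B.zero_not_mem
  have hz : α = 0 := by
    rw [B.coord_spec α hα]
    apply Finset.sum_eq_zero
    intro γ hγ
    rw [h γ hγ]; simp
  rwa [hz] at hα

lemma coord_lower {α : V} (hα : α ∈ B.Φ) :
    ∀ γ ∈ B.Δ, -B.coord B.highest γ ≤ B.coord α γ := by
  intro γ hγ
  have h1 := B.highest_is_highest (-α) (B.neg_mem α hα) γ hγ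
  rw [B.coord_neg hα γ hγ] at h1
  omega

lemma neg_coords {α : V} (hα : α ∈ B.Φ) (h : ¬ B.IsPos α) :
    ∀ γ ∈ B.Δ, B.coord α γ ≤ 0 := by
  rcases B.coord_sign α hα with h1 | h1
  · exact absurd h1 h
  · exact h1

lemma eps_of_pos {α : V} (h : B.IsPos α) : B.eps α = 0 := by
  unfold eps; rw [if_pos h]

lemma eps_of_neg {α : V} (h : ¬ B.IsPos α) : B.eps α = 1 := by
  unfold eps; rw [if_neg h]

lemma isPos_of_eps_zero {α : V} (h : B.eps α = 0) : B.IsPos α := by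
  by_contra hc
  rw [B.eps_of_neg hc] at h
  exact one_ne_zero h

lemma eps_nonneg (α : V) : 0 ≤ B.eps α := by
  unfold eps; split_ifs <;> omega

lemma rle_def (α β : V) : B.rle α β ↔ (B.eps α ≤ B.eps β ∧ ∀ γ ∈ B.Δ,
    B.coord α γ + B.eps α * B.coord B.highest γ ≤
    B.coord β γ + B.eps β * B.coord B.highest γ) := Iff.rfl

lemma root_ne_zero {α : V} (hα : α ∈ B.Φ) : α ≠ 0 :=
  fun h => B.zero_not_mem (h ▸ hα)

lemma inner_expand (α : V) {β : V} (hβ : β ∈ B.Φ) :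
    (inner ℝ α β : ℝ) = ∑ γ ∈ B.Δ, (B.coord β γ : ℝ) * (inner ℝ α γ : ℝ) := by
  conv_lhs => rw [B.coord_spec β hβ]
  rw [inner_sum]
  simp [real_inner_smul_right]

lemma inner_self_pos' {α : V} (hα : α ∈ B.Φ) : (0:ℝ) < inner ℝ α α :=
  lt_of_not_ge (fun h => B.root_ne_zero hα (real_inner_self_nonpos.mp h))

lemma exists_inner_pos {α : V} (hα : α ∈ B.Φ) (hpos : B.IsPos α) :
    ∃ γ ∈ B.Δ, 0 < (inner ℝ α γ : ℝ) := by
  by_contra h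
  push_neg at h
  have h1 : (inner ℝ α α : ℝ) ≤ 0 := by
    rw [B.inner_expand α hα]
    apply Finset.sum_nonpos
    intro γ hγ
    apply mul_nonpos_of_nonneg_of_nonpos
    · exact_mod_cast hpos γ hγ
    · exact h γ hγ
  exact absurd h1 (not_le.mpr (B.inner_self_pos' hα))

lemma coord_sub_smul {α γ0 : V} (hα : α ∈ B.Φ) (h0 : γ0 ∈ B.Δ) (n : ℤ)
    (hβ : α - (n:ℝ) • γ0 ∈ B.Φ) :
    ∀ γ ∈ B.Δ, B.coord (α - (n:ℝ) • γ0) γ = B.coord α γ - n * (if γ = γ0 then 1 else 0) := by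
  apply B.coord_repr hβ
  have h1 : ∀ γ ∈ B.Δ, (Int.cast (B.coord α γ - n * (if γ = γ0 then 1 else 0)) : ℝ) • γ
      = (B.coord α γ : ℝ) • γ - (n:ℝ) • ((if γ = γ0 then (1:ℝ) else 0) • γ) := by
    intro γ _
    split_ifs <;> push_cast <;> simp [sub_smul]
  rw [Finset.sum_congr rfl h1, Finset.sum_sub_distrib, ← Finset.smul_sum, B.base_sum h0,
    ← B.coord_spec α hα]

lemma step_down {α γ0 : V} (hα : α ∈ B.Φ) (h0 : γ0 ∈ B.Δ) (hip : 0 < (inner ℝ α γ0 : ℝ)) :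
    ∃ n : ℤ, 1 ≤ n ∧ (α - (n:ℝ) • γ0 ∈ B.Φ) ∧
      (∀ γ ∈ B.Δ, B.coord (α - (n:ℝ) • γ0) γ = B.coord α γ - n * (if γ = γ0 then 1 else 0)) := by
  obtain ⟨n, hn⟩ := B.crystallographic γ0 (B.base_sub h0) α hα
  rw [real_inner_comm α γ0] at hn
  have hd : (0:ℝ) < inner ℝ γ0 γ0 := B.inner_self_pos' (B.base_sub h0)
  have hnpos : (0:ℝ) < n := by
    rw [← hn]
    positivity
  have hn1 : 1 ≤ n := by exact_mod_cast hnpos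
  have hβ : α - (n:ℝ) • γ0 ∈ B.Φ := by
    have := B.reflect_mem γ0 (B.base_sub h0) α hα
    rwa [hn] at this
  exact ⟨n, hn1, hβ, B.coord_sub_smul hα h0 n hβ⟩

lemma coord_add_highest {α : V} (hα : α ∈ B.Φ) (hβ : α + B.highest ∈ B.Φ) :
    ∀ γ ∈ B.Δ, B.coord (α + B.highest) γ = B.coord α γ + B.coord B.highest γ := by
  apply B.coord_repr hβ
  have h1 : ∀ γ ∈ B.Δ, (Int.cast (B.coord α γ + B.coord B.highest γ) : ℝ) • γ
      = (B.coord α γ : ℝ) • γ + (B.coord B.highest γ : ℝ) • γ := by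
    intro γ _; push_cast; rw [add_smul]
  rw [Finset.sum_congr rfl h1, Finset.sum_add_distrib, ← B.coord_spec α hα,
    ← B.coord_spec B.highest B.highest_mem]

lemma add_highest_mem {α : V} (hα : α ∈ B.Φ) (hH : α ≠ -B.highest)
    (hip : (inner ℝ α B.highest : ℝ) < 0) : α + B.highest ∈ B.Φ := by
  have hHΦ := B.highest_mem
  have hHH : (0:ℝ) < inner ℝ B.highest B.highest := B.inner_self_pos' hHΦ
  have hαα : (0:ℝ) < inner ℝ α α := B.inner_self_pos' hα
  have hsym : (inner ℝ B.highest α : ℝ) = inner ℝ α B.highest := real_inner_comm _ _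
  obtain ⟨n, hn⟩ := B.crystallographic B.highest hHΦ α hα
  obtain ⟨m, hm⟩ := B.crystallographic α hα B.highest hHΦ
  have hn' : 2 * (inner ℝ B.highest α : ℝ) = n * inner ℝ B.highest B.highest :=
    (div_eq_iff (ne_of_gt hHH)).mp hn
  have hm' : 2 * (inner ℝ α B.highest : ℝ) = m * inner ℝ α α :=
    (div_eq_iff (ne_of_gt hαα)).mp hm
  have hnneg : n ≤ -1 := by
    have : (n:ℝ) < 0 := by nlinarith
    have : n < 0 := by exact_mod_cast this
    omega
  have hmneg : m ≤ -1 := by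
    have : (m:ℝ) < 0 := by nlinarith
    have : m < 0 := by exact_mod_cast this
    omega
  by_cases hn1 : n = -1
  · have h1 := B.reflect_mem B.highest hHΦ α hα
    have h2 : 2 * (inner ℝ α B.highest : ℝ) / inner ℝ B.highest B.highest = (n:ℝ) := by
      rw [← hsym]; exact hn
    rw [h2, hn1] at h1
    push_cast at h1
    rwa [neg_one_smul, sub_neg_eq_add] at h1
  by_cases hm1 : m = -1
  · have h1 := B.reflect_mem α hα B.highest hHΦ
    have h2 : 2 * (inner ℝ B.highest α : ℝ) / inner ℝ α α = (m:ℝ) := by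
      rw [hsym]; exact hm
    rw [h2, hm1] at h1
    push_cast at h1
    rw [neg_one_smul, sub_neg_eq_add] at h1
    rwa [add_comm] at h1
  exfalso
  have hn2 : n ≤ -2 := by omega
  have hm2 : m ≤ -2 := by omega
  have hCS : (inner ℝ α B.highest : ℝ) * inner ℝ α B.highest ≤ inner ℝ α α * inner ℝ B.highest B.highest :=
    real_inner_mul_inner_self_le α B.highest
  have hkey : (n:ℝ) * m * (inner ℝ B.highest B.highest * inner ℝ α α)
      = 4 * ((inner ℝ α B.highest : ℝ) * inner ℝ α B.highest) := by
    nlinarith [hn', hm', hsym]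
  have hnm : (n:ℝ) * m ≤ 4 := by nlinarith [mul_pos hHH hαα]
  have hnmZ : n * m ≤ 4 := by exact_mod_cast hnm
  have hne : n = -2 := by nlinarith
  have hme : m = -2 := by nlinarith
  have h1 : (inner ℝ B.highest α : ℝ) = -(inner ℝ B.highest B.highest : ℝ) := by
    rw [hne] at hn'; push_cast at hn'; linarith
  have h2 : (inner ℝ α B.highest : ℝ) = -(inner ℝ α α : ℝ) := by
    rw [hme] at hm'; push_cast at hm'; linarith
  have h3 : (inner ℝ (α + B.highest) (α + B.highest) : ℝ) = 0 := by
    rw [real_inner_add_add_self]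
    rw [hsym] at h1
    linarith
  have h4 : α + B.highest = 0 := by
    by_contra h4
    exact absurd h3 (ne_of_gt (lt_of_not_ge (fun h => h4 (real_inner_self_nonpos.mp h))))
  exact hH (eq_neg_of_add_eq_zero_left h4)

lemma minimal_aux_pos {α : V} (hα : α ∈ B.Φ) (hpos : B.IsPos α) (hΔ : α ∉ B.Δ) :
    ∃ β ∈ B.Φ, B.rle β α ∧ β ≠ α := by
  obtain ⟨γ0, h0, hip⟩ := B.exists_inner_pos hα hpos
  obtain ⟨n, hn1, hβΦ, hcoord⟩ := B.step_down hα h0 hip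
  set β := α - (n:ℝ) • γ0 with hβ
  have hposβ : B.IsPos β := by
    rcases B.coord_sign β hβΦ with h | h
    · exact h
    · exfalso
      have hz : ∀ γ ∈ B.Δ, γ ≠ γ0 → B.coord α γ = 0 := by
        intro γ hγ hne
        have h1 := h γ hγ
        rw [hcoord γ hγ, if_neg hne] at h1
        have h2 := hpos γ hγ
        omega
      have hcol : α = ((B.coord α γ0 : ℝ)) • γ0 := by
        conv_lhs => rw [B.coord_spec α hα]
        exact Finset.sum_eq_single γ0 (fun γ hγ hne => by rw [hz γ hγ hne]; simp)
          (fun h' => absurd h0 h')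
      have hmem : ((B.coord α γ0 : ℝ)) • γ0 ∈ B.Φ := hcol ▸ hα
      rcases B.reduced γ0 (B.base_sub h0) _ hmem with h1 | h1
      · apply hΔ
        have : α = γ0 := by rw [hcol, h1, one_smul]
        rwa [this]
      · have : B.coord α γ0 = -1 := by exact_mod_cast h1
        have := hpos γ0 h0
        omega
  refine ⟨β, hβΦ, ?_, ?_⟩
  · rw [rle_def, B.eps_of_pos hposβ, B.eps_of_pos hpos]
    refine ⟨le_refl _, ?_⟩
    intro γ hγ
    rw [hcoord γ hγ]
    have : (0:ℤ) ≤ n * (if γ = γ0 then 1 else 0) := by split_ifs <;> omega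
    omega
  · intro h
    have h1 := hcoord γ0 h0
    rw [h, if_pos rfl] at h1
    omega

lemma minimal_aux_neg {α : V} (hα : α ∈ B.Φ) (hneg : ¬ B.IsPos α) (hH : α ≠ -B.highest) :
    ∃ β ∈ B.Φ, B.rle β α ∧ β ≠ α := by
  by_cases hex : ∃ γ0 ∈ B.Δ, 0 < (inner ℝ α γ0 : ℝ)
  · obtain ⟨γ0, h0, hip⟩ := hex
    obtain ⟨n, hn1, hβΦ, hcoord⟩ := B.step_down hα h0 hip
    set β := α - (n:ℝ) • γ0 with hβ
    have hnegβ : ¬ B.IsPos β := by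
      intro hp
      have h1 := hp γ0 h0
      rw [hcoord γ0 h0, if_pos rfl] at h1
      have h2 := B.neg_coords hα hneg γ0 h0
      omega
    refine ⟨β, hβΦ, ?_, ?_⟩
    · rw [rle_def, B.eps_of_neg hnegβ, B.eps_of_neg hneg]
      refine ⟨le_refl _, ?_⟩
      intro γ hγ
      rw [hcoord γ hγ]
      have : (0:ℤ) ≤ n * (if γ = γ0 then 1 else 0) := by split_ifs <;> omega
      omega
    · intro h
      have h1 := hcoord γ0 h0
      rw [h, if_pos rfl] at h1
      omega
  · push_neg at hex
    have hiH : (inner ℝ α B.highest : ℝ) < 0 := by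
      have hexp : (inner ℝ α B.highest : ℝ)
          = ∑ γ ∈ B.Δ, (B.coord B.highest γ : ℝ) * (inner ℝ α γ : ℝ) :=
        B.inner_expand α B.highest_mem
      have hterms : ∀ γ ∈ B.Δ, (B.coord B.highest γ : ℝ) * (inner ℝ α γ : ℝ) ≤ 0 := by
        intro γ hγ
        apply mul_nonpos_of_nonneg_of_nonpos
        · have h1 := B.highest_pos γ hγ
          have h2 : (0:ℤ) ≤ B.coord B.highest γ := by omega
          exact_mod_cast h2
        · exact hex γ hγ
      have hle : (inner ℝ α B.highest : ℝ) ≤ 0 := by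
        rw [hexp]; exact Finset.sum_nonpos hterms
      rcases lt_or_eq_of_le hle with h | h
      · exact h
      · exfalso
        have hz := (Finset.sum_eq_zero_iff_of_nonpos hterms).mp (by rw [← hexp]; exact h)
        have hz2 : ∀ γ ∈ B.Δ, (inner ℝ α γ : ℝ) = 0 := by
          intro γ hγ
          have h1 := hz γ hγ
          have h2 : (0:ℝ) < (B.coord B.highest γ : ℝ) := by
            have := B.highest_pos γ hγ
            exact_mod_cast lt_of_lt_of_le zero_lt_one (by exact_mod_cast this)
          exact (mul_eq_zero.mp h1).resolve_left (ne_of_gt h2)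
        have : (inner ℝ α α : ℝ) = 0 := by
          rw [B.inner_expand α hα]
          apply Finset.sum_eq_zero
          intro γ hγ
          rw [hz2 γ hγ, mul_zero]
        exact absurd this (ne_of_gt (B.inner_self_pos' hα))
    have hsum : α + B.highest ∈ B.Φ := B.add_highest_mem hα hH hiH
    have hcoord := B.coord_add_highest hα hsum
    have hposβ : B.IsPos (α + B.highest) := by
      intro γ hγ
      rw [hcoord γ hγ]
      have := B.coord_lower hα γ hγ
      omega
    refine ⟨α + B.highest, hsum, ?_, ?_⟩
    · rw [rle_def, B.eps_of_pos hposβ, B.eps_of_neg hneg]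
      refine ⟨zero_le_one, ?_⟩
      intro γ hγ
      rw [hcoord γ hγ]
      omega
    · intro h
      have : B.highest = 0 := by
        have := congrArg (fun x => x - α) h
        simpa using this
      exact B.root_ne_zero B.highest_mem this
end BasedRootSystem
namespace BasedRootSystem

variable {V : Type*} [NormedAddCommGroup V] [InnerProductSpace ℝ V] (B : BasedRootSystem V)

lemma eps_neg_eq {α : V} (hα : α ∈ B.Φ) : B.eps (-α) = 1 - B.eps α := by
  by_cases h : B.IsPos α
  · have hneg : ¬ B.IsPos (-α) := by
      intro hp
      obtain ⟨γ, hγ, hne⟩ := B.exists_coord_ne hα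
      have h1 := hp γ hγ
      rw [B.coord_neg hα γ hγ] at h1
      have h2 := h γ hγ
      omega
    rw [B.eps_of_pos h, B.eps_of_neg hneg]; omega
  · have hpos : B.IsPos (-α) := by
      intro γ hγ
      rw [B.coord_neg hα γ hγ]
      have := B.neg_coords hα h γ hγ
      omega
    rw [B.eps_of_neg h, B.eps_of_pos hpos]; omega

end BasedRootSystem

/-- (1) the minimal elements of the order `≤` on `Φ` are exactly the
elements of `Δ'`; (2) `α ≤ β` implies `-β ≤ -α`; (3) on positive roots, `≤`
coincides with the dominance order relative to `Δ`. -/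
theorem stmt4 {V : Type*} [NormedAddCommGroup V] [InnerProductSpace ℝ V]
    (B : BasedRootSystem V) :
    (∀ α ∈ B.Φ, ((∀ β ∈ B.Φ, B.rle β α → β = α) ↔ α ∈ B.extBase)) ∧
    (∀ α ∈ B.Φ, ∀ β ∈ B.Φ, B.rle α β → B.rle (-β) (-α)) ∧
    (∀ α ∈ B.Φ, ∀ β ∈ B.Φ, B.IsPos α → B.IsPos β →
      (B.rle α β ↔ ∀ γ ∈ B.Δ, B.coord α γ ≤ B.coord β γ)) := by
  classical
  refine ⟨?_, ?_, ?_⟩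
  · intro α hα
    constructor
    · intro hmin
      by_contra hnot
      have hΔ : α ∉ B.Δ := fun h => hnot (by
        unfold BasedRootSystem.extBase
        exact Finset.mem_insert_of_mem h)
      have hH : α ≠ -B.highest := fun h => hnot (by
        unfold BasedRootSystem.extBase
        rw [h]; exact Finset.mem_insert_self _ _)
      by_cases hpos : B.IsPos α
      · obtain ⟨β, hβΦ, hle, hne⟩ := B.minimal_aux_pos hα hpos hΔ
        exact hne (hmin β hβΦ hle)
      · obtain ⟨β, hβΦ, hle, hne⟩ := B.minimal_aux_neg hα hpos hH
        exact hne (hmin β hβΦ hle)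
    · intro hmem β hβ hle
      have hmem' : α = -B.highest ∨ α ∈ B.Δ := by
        unfold BasedRootSystem.extBase at hmem
        exact Finset.mem_insert.mp hmem
      obtain ⟨γ1, hγ1, _⟩ := B.exists_coord_ne B.highest_mem
      rcases hmem' with h | h
      · subst h
        have hnegα : ¬ B.IsPos (-B.highest) := by
          intro hp
          have h1 := hp γ1 hγ1
          rw [B.coord_neg B.highest_mem γ1 hγ1] at h1
          have := B.highest_pos γ1 hγ1
          omega
        rw [B.rle_def, B.eps_of_neg hnegα] at hle
        obtain ⟨h1, h2⟩ := hle
        by_cases hpβ : B.IsPos β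
        · exfalso
          rw [B.eps_of_pos hpβ] at h2
          obtain ⟨γ2, hγ2, hne2⟩ := B.exists_coord_ne hβ
          have h3 := h2 γ2 hγ2
          rw [B.coord_neg B.highest_mem γ2 hγ2] at h3
          have h4 := hpβ γ2 hγ2
          omega
        · rw [B.eps_of_neg hpβ] at h2
          apply B.eq_of_coord_eq hβ (B.neg_mem _ B.highest_mem)
          intro γ hγ
          have h3 := h2 γ hγ
          rw [B.coord_neg B.highest_mem γ hγ] at h3 ⊢
          have h4 := B.coord_lower hβ γ hγ
          omega
      · have hposα : B.IsPos α := by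
          intro γ hγ
          rw [B.coord_base h γ hγ]
          split_ifs <;> omega
        rw [B.rle_def, B.eps_of_pos hposα] at hle
        obtain ⟨h1, h2⟩ := hle
        have heβ : B.eps β = 0 := le_antisymm h1 (B.eps_nonneg β)
        have hpβ : B.IsPos β := B.isPos_of_eps_zero heβ
        rw [heβ] at h2
        have hle' : ∀ γ ∈ B.Δ, B.coord β γ ≤ B.coord α γ := by
          intro γ hγ
          have := h2 γ hγ
          omega
        have hb : ∀ γ ∈ B.Δ, γ ≠ α → B.coord β γ = 0 := by
          intro γ hγ hne
          have h3 := hle' γ hγ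
          rw [B.coord_base h γ hγ, if_neg hne] at h3
          have h4 := hpβ γ hγ
          omega
        have hone : B.coord β α = 1 := by
          have h3 := hle' α h
          rw [B.coord_base h α h, if_pos rfl] at h3
          have h4 := hpβ α h
          rcases (by omega : B.coord β α = 0 ∨ B.coord β α = 1) with h5 | h5
          · exfalso
            obtain ⟨γ2, hγ2, hne2⟩ := B.exists_coord_ne hβ
            by_cases hc : γ2 = α
            · rw [hc] at hne2; exact hne2 h5
            · exact hne2 (hb γ2 hγ2 hc)
          · exact h5
        apply B.eq_of_coord_eq hβ (B.base_sub h)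
        intro γ hγ
        rw [B.coord_base h γ hγ]
        split_ifs with hc
        · rw [hc]; exact hone
        · exact hb γ hγ hc
  · intro α hα β hβ hle
    rw [B.rle_def] at hle ⊢
    obtain ⟨h1, h2⟩ := hle
    have hnα : B.eps (-α) = 1 - B.eps α := B.eps_neg_eq hα
    have hnβ : B.eps (-β) = 1 - B.eps β := B.eps_neg_eq hβ
    constructor
    · rw [hnα, hnβ]; omega
    · intro γ hγ
      rw [hnα, hnβ, B.coord_neg hα γ hγ, B.coord_neg hβ γ hγ]
      have h3 := h2 γ hγ
      nlinarith [h3]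
  · intro α hα β hβ hpa hpb
    rw [B.rle_def, B.eps_of_pos hpa, B.eps_of_pos hpb]
    simp only [zero_mul, add_zero, le_refl, true_and]
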